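/- Suppose (r, r′) ∈ ℂ² \ (L_even ∪ L_odd). Then the ℂ-vector space of diagonal sequences for (r, r′) is one-dimensional, and every nonzero diagonal sequence s satisfies: (a) if r ∉ −ρ−ℕ and r′ ∉ −ρ′−ℕ, then s(α) ≠ 0 for all α ∈ ℕ; (b) if r = −ρ−i with i ∈ ℕ and r′ ∉ −ρ′−ℕ, then s(α) = 0 for all α ≤ i and s(α) ≠ 0 for all α > i; (c) if r ∉ −ρ−ℕ and r′ = −ρ′−j with j ∈ ℕ, then s(α) ≠ 0 for all α ≤ j and s(α) = 0 for all α > j; (d) if r = −ρ−i and r′ = −ρ′−j with i, j ∈ ℕ and i < j, then s(α) ≠ 0 for all α with i < α ≤ j and s(α) = 0 for all other α. -/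
import Mathlib


noncomputable section

/-- ρ = (n-1)/2 as a complex number. -/
def rho (n : ℕ) : ℂ := ((n : ℂ) - 1) / 2

/-- ρ' = (n-2)/2 as a complex number. -/
def rho' (n : ℕ) : ℂ := ((n : ℂ) - 2) / 2

/-- A diagonal sequence for `(r, r')`:
`(2r'+2α+n−2)·s(α) = (2r+2α+n−1)·s(α+1)` for all `α ∈ ℕ`. -/
def IsDiagSeq (n : ℕ) (r r' : ℂ) (s : ℕ → ℂ) : Prop :=
  ∀ α : ℕ, (2*r' + 2*(α : ℂ) + (n : ℂ) - 2) * s α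
    = (2*r + 2*(α : ℂ) + (n : ℂ) - 1) * s (α + 1)

/-- The ℂ-vector space of diagonal sequences for `(r, r')`. -/
def diagSub (n : ℕ) (r r' : ℂ) : Submodule ℂ (ℕ → ℂ) where
  carrier := {s | IsDiagSeq n r r' s}
  add_mem' := by
    intro a b ha hb α
    simp only [Pi.add_apply]
    linear_combination ha α + hb α
  zero_mem' := by
    intro α
    simp
  smul_mem' := by
    intro c s hs α
    simp only [Pi.smul_apply, smul_eq_mul]
    linear_combination c * hs α

/-- L_even = {(−ρ−i, −ρ′−j) : i, j ∈ ℕ, i − j ∈ 2ℕ}. -/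
def Leven (n : ℕ) : Set (ℂ × ℂ) :=
  {p | ∃ i j : ℕ, p.1 = -rho n - (i : ℂ) ∧ p.2 = -rho' n - (j : ℂ) ∧ ∃ k : ℕ, i = j + 2*k}

/-- L_odd = {(−ρ−i, −ρ′−j) : i, j ∈ ℕ, i − j ∈ 2ℕ+1}. -/
def Lodd (n : ℕ) : Set (ℂ × ℂ) :=
  {p | ∃ i j : ℕ, p.1 = -rho n - (i : ℂ) ∧ p.2 = -rho' n - (j : ℂ) ∧ ∃ k : ℕ, i = j + 2*k + 1}

def Acoef (n : ℕ) (r' : ℂ) (α : ℕ) : ℂ := 2*r' + 2*(α : ℂ) + (n : ℂ) - 2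
def Bcoef (n : ℕ) (r : ℂ) (α : ℕ) : ℂ := 2*r + 2*(α : ℂ) + (n : ℂ) - 1

lemma Acoef_eq_zero_iff (n : ℕ) (r' : ℂ) (α : ℕ) :
    Acoef n r' α = 0 ↔ r' = -rho' n - (α : ℂ) := by
  have h : Acoef n r' α = 2 * (r' - (-rho' n - (α : ℂ))) := by
    simp only [Acoef, rho']; ring
  rw [h, mul_eq_zero, sub_eq_zero]
  simp [two_ne_zero]

lemma Bcoef_eq_zero_iff (n : ℕ) (r : ℂ) (α : ℕ) :
    Bcoef n r α = 0 ↔ r = -rho n - (α : ℂ) := by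
  have h : Bcoef n r α = 2 * (r - (-rho n - (α : ℂ))) := by
    simp only [Bcoef, rho]; ring
  rw [h, mul_eq_zero, sub_eq_zero]
  simp [two_ne_zero]

lemma lat_inj {c : ℂ} {i i' : ℕ} (h : -c - (i : ℂ) = -c - (i' : ℂ)) : i = i' := by
  have : (i : ℂ) = (i' : ℂ) := by linear_combination -h
  exact_mod_cast this

lemma diag_step {n : ℕ} {r r' : ℂ} {s : ℕ → ℂ} (hs : IsDiagSeq n r r' s) (α : ℕ) :
    Acoef n r' α * s α = Bcoef n r α * s (α + 1) := hs α

lemma fwd_zero {n : ℕ} {r r' : ℂ} {s : ℕ → ℂ} (hs : IsDiagSeq n r r' s) (p : ℕ)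
    (hB : ∀ α, p ≤ α → Bcoef n r α ≠ 0) (h0 : s p = 0) :
    ∀ α, p ≤ α → s α = 0 := by
  intro α hα
  induction α, hα using Nat.le_induction with
  | base => exact h0
  | succ m hm ih =>
    have h := diag_step hs m
    rw [ih, mul_zero] at h
    exact ((mul_eq_zero.mp h.symm).resolve_left (hB m hm))

lemma bwd_zero {n : ℕ} {r r' : ℂ} {s : ℕ → ℂ} (hs : IsDiagSeq n r r' s) (p : ℕ)
    (hA : ∀ α, α < p → Acoef n r' α ≠ 0) (h0 : s p = 0) :
    ∀ α, α ≤ p → s α = 0 := by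
  have key : ∀ d, s (p - d) = 0 := by
    intro d
    induction d with
    | zero => simpa using h0
    | succ d ih =>
      by_cases hd : d < p
      · have h1 : p - (d+1) + 1 = p - d := by omega
        have h := diag_step hs (p - (d+1))
        rw [h1, ih, mul_zero] at h
        exact (mul_eq_zero.mp h).resolve_left (hA _ (by omega))
      · have h1 : p - (d+1) = p - d := by omega
        rw [h1]; exact ih
  intro α hα
  have := key (p - α)
  rwa [Nat.sub_sub_self hα] at this

lemma fwd_nonzero {n : ℕ} {r r' : ℂ} {s : ℕ → ℂ} (hs : IsDiagSeq n r r' s) (p q : ℕ)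
    (hA : ∀ α, p ≤ α → α < q → Acoef n r' α ≠ 0) (h0 : s p ≠ 0) :
    ∀ α, p ≤ α → α ≤ q → s α ≠ 0 := by
  intro α hα
  induction α, hα using Nat.le_induction with
  | base => intro _; exact h0
  | succ m hm ih =>
    intro hmq h1
    have hsm : s m ≠ 0 := ih (by omega)
    have h := diag_step hs m
    rw [h1, mul_zero] at h
    exact (mul_ne_zero (hA m hm (by omega)) hsm) h

lemma uniq_zero {n : ℕ} {r r' : ℂ} {s : ℕ → ℂ} (hs : IsDiagSeq n r r' s) (p : ℕ)
    (hA : ∀ α, α < p → Acoef n r' α ≠ 0) (hB : ∀ α, p ≤ α → Bcoef n r α ≠ 0)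
    (h0 : s p = 0) : s = 0 := by
  funext α
  rcases le_or_gt α p with h | h
  · exact bwd_zero hs p hA h0 α h
  · exact fwd_zero hs p hB h0 α h.le

def canSeq (n : ℕ) (r r' : ℂ) (p : ℕ) : ℕ → ℂ
  | 0 => if p = 0 then 1 else 0
  | (α+1) => if α + 1 < p then 0
      else if α + 1 = p then 1
      else Acoef n r' α * canSeq n r r' p α / Bcoef n r α

lemma canSeq_self (n : ℕ) (r r' : ℂ) (p : ℕ) : canSeq n r r' p p = 1 := by
  cases p with
  | zero => simp [canSeq]
  | succ q => simp [canSeq]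

lemma canSeq_lt (n : ℕ) (r r' : ℂ) (p : ℕ) {α : ℕ} (h : α < p) : canSeq n r r' p α = 0 := by
  cases α with
  | zero => simp [canSeq]; omega
  | succ β => rw [canSeq]; rw [if_pos h]

lemma canSeq_isDiag (n : ℕ) (r r' : ℂ) (p : ℕ)
    (hp : p = 0 ∨ Bcoef n r (p - 1) = 0)
    (hB : ∀ α, p ≤ α → Bcoef n r α ≠ 0) :
    IsDiagSeq n r r' (canSeq n r r' p) := by
  intro α
  show Acoef n r' α * canSeq n r r' p α = Bcoef n r α * canSeq n r r' p (α+1)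
  rcases lt_trichotomy (α + 1) p with h | h | h
  · rw [canSeq_lt n r r' p h, canSeq_lt n r r' p (by omega), mul_zero, mul_zero]
  · have hp' : Bcoef n r α = 0 := by
      rcases hp with h0 | h0
      · omega
      · rwa [show p - 1 = α by omega] at h0
    rw [canSeq_lt n r r' p (by omega), show α + 1 = p from h, canSeq_self, hp', mul_zero,
      zero_mul]
  · have hα : p ≤ α := by omega
    have hBα := hB α hα
    rw [show canSeq n r r' p (α+1) = Acoef n r' α * canSeq n r r' p α / Bcoef n r α by
      rw [canSeq]; rw [if_neg (by omega), if_neg (by omega)]]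
    rw [mul_div_cancel₀ _ hBα]

lemma main_aux (n : ℕ) (r r' : ℂ) (p : ℕ)
    (hp : p = 0 ∨ Bcoef n r (p - 1) = 0)
    (hA : ∀ α, α < p → Acoef n r' α ≠ 0)
    (hB : ∀ α, p ≤ α → Bcoef n r α ≠ 0) :
    Module.finrank ℂ (diagSub n r r') = 1 ∧
      ∀ s : ℕ → ℂ, IsDiagSeq n r r' s → s ≠ 0 → s p ≠ 0 := by
  constructor
  · have hv : IsDiagSeq n r r' (canSeq n r r' p) := canSeq_isDiag n r r' p hp hB
    set v : diagSub n r r' := ⟨canSeq n r r' p, hv⟩ with hvdef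
    apply finrank_eq_one v
    · intro h
      have h2 := congrFun (congrArg Subtype.val h) p
      rw [hvdef] at h2
      simp only [Submodule.coe_zero, Pi.zero_apply] at h2
      rw [canSeq_self] at h2
      exact one_ne_zero h2
    · intro w
      refine ⟨w.1 p, ?_⟩
      have hdiff : IsDiagSeq n r r' (w.1 - w.1 p • canSeq n r r' p) :=
        (diagSub n r r').sub_mem w.2 ((diagSub n r r').smul_mem _ hv)
      have hz : (w.1 - w.1 p • canSeq n r r' p) p = 0 := by
        simp [canSeq_self]
      have := uniq_zero hdiff p hA hB hz
      exact Subtype.ext (sub_eq_zero.mp this).symm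
  · intro s hs hne h0
    exact hne (uniq_zero hs p hA hB h0)

lemma lt_of_notL {n : ℕ} {r r' : ℂ} (hL : (r, r') ∉ Leven n ∪ Lodd n)
    {i j : ℕ} (hi : r = -rho n - (i : ℂ)) (hj : r' = -rho' n - (j : ℂ)) : i < j := by
  by_contra h
  push_neg at h
  rcases Nat.even_or_odd (i - j) with ⟨k, hk⟩ | ⟨k, hk⟩
  · exact hL (Or.inl ⟨i, j, hi, hj, k, by omega⟩)
  · exact hL (Or.inr ⟨i, j, hi, hj, k, by omega⟩)

theorem statement0 (n : ℕ) (hn : 3 ≤ n) (r r' : ℂ)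
    (hL : (r, r') ∉ Leven n ∪ Lodd n) :
    Module.finrank ℂ (diagSub n r r') = 1 ∧
    ∀ s : ℕ → ℂ, IsDiagSeq n r r' s → s ≠ 0 →
      ((r ∉ Set.range (fun i : ℕ => -rho n - (i : ℂ)) →
        r' ∉ Set.range (fun j : ℕ => -rho' n - (j : ℂ)) →
        ∀ α : ℕ, s α ≠ 0) ∧
       (∀ i : ℕ, r = -rho n - (i : ℂ) →
        r' ∉ Set.range (fun j : ℕ => -rho' n - (j : ℂ)) →
        (∀ α ≤ i, s α = 0) ∧ (∀ α, i < α → s α ≠ 0)) ∧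
       (r ∉ Set.range (fun i : ℕ => -rho n - (i : ℂ)) →
        ∀ j : ℕ, r' = -rho' n - (j : ℂ) →
        (∀ α ≤ j, s α ≠ 0) ∧ (∀ α, j < α → s α = 0)) ∧
       (∀ i j : ℕ, r = -rho n - (i : ℂ) → r' = -rho' n - (j : ℂ) → i < j →
        (∀ α, i < α → α ≤ j → s α ≠ 0) ∧ (∀ α, α ≤ i ∨ j < α → s α = 0))) := by
  by_cases hr : r ∈ Set.range (fun i : ℕ => -rho n - (i : ℂ))
  · by_cases hr' : r' ∈ Set.range (fun j : ℕ => -rho' n - (j : ℂ))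
    -- Case (d): both on the lattice, necessarily i < j
    · obtain ⟨i, hi⟩ := hr
      obtain ⟨j, hj⟩ := hr'
      have hi' : r = -rho n - (i : ℂ) := hi.symm
      have hj' : r' = -rho' n - (j : ℂ) := hj.symm
      have hij : i < j := lt_of_notL hL hi' hj'
      have hBz : Bcoef n r i = 0 := (Bcoef_eq_zero_iff n r i).mpr hi'
      have hBnz : ∀ α : ℕ, α ≠ i → Bcoef n r α ≠ 0 := by
        intro α hne h
        exact hne (lat_inj (hi'.symm.trans ((Bcoef_eq_zero_iff n r α).mp h))).symm
      have hAz : Acoef n r' j = 0 := (Acoef_eq_zero_iff n r' j).mpr hj'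
      have hAnz : ∀ α : ℕ, α ≠ j → Acoef n r' α ≠ 0 := by
        intro α hne h
        exact hne (lat_inj (hj'.symm.trans ((Acoef_eq_zero_iff n r' α).mp h))).symm
      obtain ⟨hfin, hpiv⟩ := main_aux n r r' (i+1)
        (Or.inr (by simpa using hBz))
        (fun α hα => hAnz α (by omega)) (fun α hα => hBnz α (by omega))
      refine ⟨hfin, ?_⟩
      intro s hs hne
      have hp : s (i+1) ≠ 0 := hpiv s hs hne
      have hsi : s i = 0 := by
        have h := diag_step hs i
        rw [hBz, zero_mul] at h
        exact (mul_eq_zero.mp h).resolve_left (hAnz i (by omega))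
      have hlow : ∀ α, α ≤ i → s α = 0 :=
        bwd_zero hs i (fun α hα => hAnz α (by omega)) hsi
      have hsj : s (j+1) = 0 := by
        have h := diag_step hs j
        rw [hAz, zero_mul] at h
        exact (mul_eq_zero.mp h.symm).resolve_left (hBnz j (by omega))
      have hhigh : ∀ α, j < α → s α = 0 :=
        fun α hα => fwd_zero hs (j+1) (fun β hβ => hBnz β (by omega)) hsj α hα
      have hwin : ∀ α, i < α → α ≤ j → s α ≠ 0 := by
        intro α h1 h2
        exact fwd_nonzero hs (i+1) j (fun β hβ1 hβ2 => hAnz β (by omega)) hp α h1 h2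
      refine ⟨?_, ?_, ?_, ?_⟩
      · intro hnr _
        exact absurd ⟨i, hi⟩ hnr
      · intro i' hi'' hnr'
        exact absurd ⟨j, hj⟩ hnr'
      · intro hnr
        exact absurd ⟨i, hi⟩ hnr
      · intro i' j' hi'' hj'' _
        have hii : i' = i := lat_inj (hi''.symm.trans hi')
        have hjj : j' = j := lat_inj (hj''.symm.trans hj')
        subst hii; subst hjj
        exact ⟨hwin, fun α hα => hα.elim (hlow α) (hhigh α)⟩
    -- Case (b): r on the lattice, r' not
    · obtain ⟨i, hi⟩ := hr
      have hi' : r = -rho n - (i : ℂ) := hi.symm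
      have hBz : Bcoef n r i = 0 := (Bcoef_eq_zero_iff n r i).mpr hi'
      have hBnz : ∀ α : ℕ, α ≠ i → Bcoef n r α ≠ 0 := by
        intro α hne h
        exact hne (lat_inj (hi'.symm.trans ((Bcoef_eq_zero_iff n r α).mp h))).symm
      have hAnz : ∀ α : ℕ, Acoef n r' α ≠ 0 := by
        intro α h
        exact hr' ⟨α, ((Acoef_eq_zero_iff n r' α).mp h).symm⟩
      obtain ⟨hfin, hpiv⟩ := main_aux n r r' (i+1)
        (Or.inr (by simpa using hBz))
        (fun α _ => hAnz α) (fun α hα => hBnz α (by omega))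
      refine ⟨hfin, ?_⟩
      intro s hs hne
      have hp : s (i+1) ≠ 0 := hpiv s hs hne
      have hsi : s i = 0 := by
        have h := diag_step hs i
        rw [hBz, zero_mul] at h
        exact (mul_eq_zero.mp h).resolve_left (hAnz i)
      have hlow : ∀ α, α ≤ i → s α = 0 :=
        bwd_zero hs i (fun α _ => hAnz α) hsi
      have hnz : ∀ α, i < α → s α ≠ 0 := by
        intro α hα
        exact fwd_nonzero hs (i+1) α (fun β _ _ => hAnz β) hp α hα le_rfl
      refine ⟨?_, ?_, ?_, ?_⟩
      · intro hnr _
        exact absurd ⟨i, hi⟩ hnr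
      · intro i' hi'' _
        have hii : i' = i := lat_inj (hi''.symm.trans hi')
        subst hii
        exact ⟨hlow, hnz⟩
      · intro hnr
        exact absurd ⟨i, hi⟩ hnr
      · intro i' j' _ hj'' _
        exact absurd ⟨j', hj''.symm⟩ hr'
  · by_cases hr' : r' ∈ Set.range (fun j : ℕ => -rho' n - (j : ℂ))
    -- Case (c): r' on the lattice, r not
    · obtain ⟨j, hj⟩ := hr'
      have hj' : r' = -rho' n - (j : ℂ) := hj.symm
      have hBnz : ∀ α : ℕ, Bcoef n r α ≠ 0 := by
        intro α h
        exact hr ⟨α, ((Bcoef_eq_zero_iff n r α).mp h).symm⟩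
      have hAz : Acoef n r' j = 0 := (Acoef_eq_zero_iff n r' j).mpr hj'
      have hAnz : ∀ α : ℕ, α ≠ j → Acoef n r' α ≠ 0 := by
        intro α hne h
        exact hne (lat_inj (hj'.symm.trans ((Acoef_eq_zero_iff n r' α).mp h))).symm
      obtain ⟨hfin, hpiv⟩ := main_aux n r r' 0 (Or.inl rfl)
        (fun α hα => absurd hα (by omega)) (fun α _ => hBnz α)
      refine ⟨hfin, ?_⟩
      intro s hs hne
      have hp : s 0 ≠ 0 := hpiv s hs hne
      have hsj : s (j+1) = 0 := by
        have h := diag_step hs j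
        rw [hAz, zero_mul] at h
        exact (mul_eq_zero.mp h.symm).resolve_left (hBnz j)
      have hhigh : ∀ α, j < α → s α = 0 :=
        fun α hα => fwd_zero hs (j+1) (fun β _ => hBnz β) hsj α hα
      have hwin : ∀ α, α ≤ j → s α ≠ 0 := by
        intro α hα
        exact fwd_nonzero hs 0 j (fun β _ hβ => hAnz β (by omega)) hp α (Nat.zero_le α) hα
      refine ⟨?_, ?_, ?_, ?_⟩
      · intro _ hnr'
        exact absurd ⟨j, hj⟩ hnr'
      · intro i hi'' _
        exact absurd ⟨i, hi''.symm⟩ hr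
      · intro _ j' hj''
        have hjj : j' = j := lat_inj (hj''.symm.trans hj')
        subst hjj
        exact ⟨hwin, hhigh⟩
      · intro i j' hi'' _ _
        exact absurd ⟨i, hi''.symm⟩ hr
    -- Case (a): neither on the lattice
    · have hBnz : ∀ α : ℕ, Bcoef n r α ≠ 0 := by
        intro α h
        exact hr ⟨α, ((Bcoef_eq_zero_iff n r α).mp h).symm⟩
      have hAnz : ∀ α : ℕ, Acoef n r' α ≠ 0 := by
        intro α h
        exact hr' ⟨α, ((Acoef_eq_zero_iff n r' α).mp h).symm⟩
      obtain ⟨hfin, hpiv⟩ := main_aux n r r' 0 (Or.inl rfl)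
        (fun α hα => absurd hα (by omega)) (fun α _ => hBnz α)
      refine ⟨hfin, ?_⟩
      intro s hs hne
      have hp : s 0 ≠ 0 := hpiv s hs hne
      have hall : ∀ α : ℕ, s α ≠ 0 := by
        intro α
        exact fwd_nonzero hs 0 α (fun β _ _ => hAnz β) hp α (Nat.zero_le α) le_rfl
      refine ⟨?_, ?_, ?_, ?_⟩
      · intro _ _
        exact hall
      · intro i hi'' _
        exact absurd ⟨i, hi''.symm⟩ hr
      · intro _ j hj''
        exact absurd ⟨j, hj''.symm⟩ hr'
      · intro i j hi'' _ _
        exact absurd ⟨i, hi''.symm⟩ hr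

end
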